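/- Let R be a discrete valuation ring of characteristic p > 0 (p prime) with uniformizer π, and set C′ := R[z]/(π^{p−1} z^p − z). Then there exists a Hopf algebra structure over R on C′ whose comultiplication Δ satisfies Δ(z̄) = z̄ ⊗ 1 + 1 ⊗ z̄, whose counit ε satisfies ε(z̄) = 0, and whose antipode S satisfies S(z̄) = −z̄, where z̄ denotes the class of z in C′. (In particular Δ is well defined: π^{p−1}(z̄⊗1 + 1⊗z̄)^p − (z̄⊗1 + 1⊗z̄) = 0 in C′ ⊗_R C′, using that (u+v)^p = u^p + v^p in characteristic p.) -/

import Mathlib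

open Polynomial
open scoped TensorProduct

set_option maxHeartbeats 1000000

set_option synthInstance.maxHeartbeats 400000
set_option linter.unusedSectionVars false
set_option linter.unusedVariables false

namespace HopfAuxM

variable {R : Type*} [CommRing R] {p : ℕ} [Fact p.Prime] [CharP R p] {π : R}

/-- Freshman's dream in an algebra over a ring of char `p`. -/
theorem freshman {B : Type*} [CommRing B] [Algebra R B] (x y : B) :
    (x + y) ^ p = x ^ p + y ^ p := by
  have hp : (p : B) = 0 := by
    rw [← map_natCast (algebraMap R B) p, CharP.cast_eq_zero, map_zero]
  rw [add_pow_prime_eq (Fact.out : p.Prime), hp, zero_mul, zero_mul, zero_mul, add_zero]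

theorem negpow {B : Type*} [CommRing B] [Algebra R B] (x : B) :
    (-x) ^ p = -(x ^ p) := by
  have hp : (p : B) = 0 := by
    rw [← map_natCast (algebraMap R B) p, CharP.cast_eq_zero, map_zero]
  rcases (Fact.out : p.Prime).eq_two_or_odd' with h | h
  · subst h
    have h2 : (2 : B) = 0 := by exact_mod_cast hp
    have : x ^ 2 + x ^ 2 = 0 := by rw [← two_mul, h2, zero_mul]
    calc (-x) ^ 2 = x ^ 2 := by ring
      _ = -(x ^ 2) := eq_neg_of_add_eq_zero_left this
  · exact h.neg_pow x

variable (p π) in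
noncomputable def fpoly : Polynomial R := C (π ^ (p - 1)) * X ^ p - X

variable (R p π) in
noncomputable abbrev Aq : Type _ :=
  Polynomial R ⧸ Ideal.span ({fpoly p π} : Set (Polynomial R))

theorem aeval_fpoly {B : Type*} [CommRing B] [Algebra R B] (b : B) :
    aeval b (fpoly p π) = algebraMap R B (π ^ (p - 1)) * b ^ p - b := by
  simp [fpoly]

/-- `aeval b (fpoly p π)` is additive in `b` in characteristic `p`. -/
theorem aeval_fpoly_add {B : Type*} [CommRing B] [Algebra R B] (x y : B) :
    aeval (x + y) (fpoly p π) = aeval x (fpoly p π) + aeval y (fpoly p π) := by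
  rw [aeval_fpoly, aeval_fpoly, aeval_fpoly, freshman (R := R)]
  ring

/-- Lift an evaluation map to the quotient. -/
noncomputable def liftQ {B : Type*} [CommRing B] [Algebra R B] (b : B)
    (hb : aeval b (fpoly p π) = 0) : Aq R p π →ₐ[R] B :=
  Ideal.Quotient.liftₐ _ (aeval b) (by
    intro a ha
    rw [Ideal.mem_span_singleton] at ha
    obtain ⟨c, rfl⟩ := ha
    rw [map_mul, hb, zero_mul])

@[simp] theorem liftQ_mk {B : Type*} [CommRing B] [Algebra R B] (b : B)
    (hb : aeval b (fpoly p π) = 0) (q : Polynomial R) :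
    liftQ b hb (Ideal.Quotient.mk _ q) = aeval b q := by
  simp [liftQ, Ideal.Quotient.liftₐ_apply]
  rfl

theorem hopf_ext {B : Type*} [CommRing B] [Algebra R B]
    {f g : Aq R p π →ₐ[R] B}
    (h : f (Ideal.Quotient.mk _ X) = g (Ideal.Quotient.mk _ X)) : f = g := by
  apply Ideal.Quotient.algHom_ext
  apply Polynomial.algHom_ext
  simpa [Ideal.Quotient.mkₐ_eq_mk] using h

theorem aeval_z_fpoly :
    aeval (Ideal.Quotient.mk (Ideal.span ({fpoly p π} : Set (Polynomial R))) X)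
      (fpoly p π) = 0 := by
  have : aeval ((Ideal.Quotient.mkₐ R (Ideal.span ({fpoly p π} : Set (Polynomial R)))) X)
      (fpoly p π) = (Ideal.Quotient.mkₐ R _) (aeval X (fpoly p π)) :=
    aeval_algHom_apply _ _ _
  simp only [aeval_X_left_apply, Ideal.Quotient.mkₐ_eq_mk] at this
  rw [this, Ideal.Quotient.eq_zero_iff_mem]
  exact Ideal.subset_span rfl

/-- `aeval` of `fpoly` at the image of a root under an algebra hom vanishes. -/
theorem aeval_map_root {B C : Type*} [CommRing B] [Algebra R B] [CommRing C] [Algebra R C]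
    (φ : B →ₐ[R] C) (b : B) (hb : aeval b (fpoly p π) = 0) :
    aeval (φ b) (fpoly p π) = 0 := by
  rw [aeval_algHom_apply, hb, map_zero]

noncomputable section Defs

/-- The generator `z̄` of `Aq`. -/
def zQ : Aq R p π := Ideal.Quotient.mk _ X

theorem zQ_root : aeval (zQ : Aq R p π) (fpoly p π) = 0 := aeval_z_fpoly

variable (R p π)

/-- counit -/
def εA : Aq R p π →ₐ[R] R :=
  liftQ (0 : R) (by
    rw [aeval_fpoly, zero_pow (Fact.out : p.Prime).pos.ne', mul_zero, sub_zero])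

/-- antipode -/
def SA : Aq R p π →ₐ[R] Aq R p π :=
  liftQ (-zQ) (by
    have h := zQ_root (R := R) (p := p) (π := π)
    rw [aeval_fpoly] at h ⊢
    rw [negpow (R := R)]
    linear_combination -h)

/-- comultiplication -/
def ΔA : Aq R p π →ₐ[R] Aq R p π ⊗[R] Aq R p π :=
  liftQ ((zQ : Aq R p π) ⊗ₜ[R] 1 + 1 ⊗ₜ[R] (zQ : Aq R p π)) (by
    have h := zQ_root (R := R) (p := p) (π := π)
    rw [aeval_fpoly] at h
    have h1 : aeval ((zQ : Aq R p π) ⊗ₜ[R] (1 : Aq R p π)) (fpoly p π) = 0 := by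
      rw [aeval_fpoly (B := Aq R p π ⊗[R] Aq R p π)]
      simp [Algebra.TensorProduct.tmul_pow, Algebra.TensorProduct.algebraMap_apply,
        Algebra.TensorProduct.tmul_mul_tmul, ← TensorProduct.sub_tmul, ← map_pow, h]
    have h2 : aeval ((1 : Aq R p π) ⊗ₜ[R] (zQ : Aq R p π)) (fpoly p π) = 0 := by
      have h' := aeval_algHom_apply
        (Algebra.TensorProduct.comm R (Aq R p π) (Aq R p π))
        ((zQ : Aq R p π) ⊗ₜ[R] (1 : Aq R p π)) (fpoly p π)
      rw [h1, map_zero, Algebra.TensorProduct.comm_tmul] at h'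
      exact h'
    rw [aeval_fpoly (B := Aq R p π ⊗[R] Aq R p π)] at h1 h2 ⊢
    have hf := freshman (R := R) (p := p) (B := Aq R p π ⊗[R] Aq R p π)
      ((zQ : Aq R p π) ⊗ₜ[R] (1 : Aq R p π)) ((1 : Aq R p π) ⊗ₜ[R] (zQ : Aq R p π))
    rw [hf]
    linear_combination h1 + h2)

@[simp] theorem εA_z : εA R p π zQ = 0 := by
  simp [εA, zQ, liftQ_mk]

@[simp] theorem SA_z : SA R p π zQ = -zQ := by
  simp [SA, zQ, liftQ_mk]

@[simp] theorem ΔA_z : ΔA R p π zQ = zQ ⊗ₜ[R] 1 + 1 ⊗ₜ[R] zQ := by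
  simp [ΔA, zQ, liftQ_mk]

theorem coassoc_alg :
    ((Algebra.TensorProduct.assoc R R R (Aq R p π) (Aq R p π) (Aq R p π)).toAlgHom.comp
      ((Algebra.TensorProduct.map (ΔA R p π) (AlgHom.id R (Aq R p π))).comp (ΔA R p π))) =
    (Algebra.TensorProduct.map (AlgHom.id R (Aq R p π)) (ΔA R p π)).comp (ΔA R p π) := by
  apply Ideal.Quotient.algHom_ext
  apply Polynomial.algHom_ext
  simp only [AlgHom.coe_comp, Function.comp_apply, Ideal.Quotient.mkₐ_eq_mk]
  show _ = _
  rw [show (Ideal.Quotient.mk (Ideal.span ({fpoly p π} : Set (Polynomial R))) X) =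
    (zQ : Aq R p π) from rfl]
  simp only [AlgHom.coe_comp, Function.comp_apply, ΔA_z, map_add,
    Algebra.TensorProduct.map_tmul, map_one, AlgHom.coe_id, id_eq,
    AlgEquiv.toAlgHom_eq_coe, AlgHom.coe_coe,
    TensorProduct.add_tmul, TensorProduct.tmul_add, Algebra.TensorProduct.one_def,
    Algebra.TensorProduct.assoc_tmul]
  erw [(ΔA R p π).map_one]
  rw [Algebra.TensorProduct.one_def]
  erw [Algebra.TensorProduct.assoc_tmul, Algebra.TensorProduct.assoc_tmul, Algebra.TensorProduct.assoc_tmul]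
  abel

theorem counit_left_alg :
    ((Algebra.TensorProduct.lid R (Aq R p π)).toAlgHom.comp
      ((Algebra.TensorProduct.map (εA R p π) (AlgHom.id R (Aq R p π))).comp (ΔA R p π))) =
    AlgHom.id R (Aq R p π) := by
  apply Ideal.Quotient.algHom_ext
  apply Polynomial.algHom_ext
  simp only [AlgHom.coe_comp, Function.comp_apply, Ideal.Quotient.mkₐ_eq_mk]
  rw [show (Ideal.Quotient.mk (Ideal.span ({fpoly p π} : Set (Polynomial R))) X) =
    (zQ : Aq R p π) from rfl]
  simp [TensorProduct.zero_tmul]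

theorem counit_right_alg :
    ((Algebra.TensorProduct.rid R R (Aq R p π)).toAlgHom.comp
      ((Algebra.TensorProduct.map (AlgHom.id R (Aq R p π)) (εA R p π)).comp (ΔA R p π))) =
    AlgHom.id R (Aq R p π) := by
  apply Ideal.Quotient.algHom_ext
  apply Polynomial.algHom_ext
  simp only [AlgHom.coe_comp, Function.comp_apply, Ideal.Quotient.mkₐ_eq_mk]
  rw [show (Ideal.Quotient.mk (Ideal.span ({fpoly p π} : Set (Polynomial R))) X) =
    (zQ : Aq R p π) from rfl]
  simp [TensorProduct.tmul_zero]

theorem antipode_left_alg :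
    ((Algebra.TensorProduct.lmul' R (S := Aq R p π)).comp
      ((Algebra.TensorProduct.map (SA R p π) (AlgHom.id R (Aq R p π))).comp (ΔA R p π))) =
    (Algebra.ofId R (Aq R p π)).comp (εA R p π) := by
  apply Ideal.Quotient.algHom_ext
  apply Polynomial.algHom_ext
  simp only [AlgHom.coe_comp, Function.comp_apply, Ideal.Quotient.mkₐ_eq_mk]
  rw [show (Ideal.Quotient.mk (Ideal.span ({fpoly p π} : Set (Polynomial R))) X) =
    (zQ : Aq R p π) from rfl]
  simp [Algebra.TensorProduct.lmul'_apply_tmul, Algebra.ofId_apply]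

theorem antipode_right_alg :
    ((Algebra.TensorProduct.lmul' R (S := Aq R p π)).comp
      ((Algebra.TensorProduct.map (AlgHom.id R (Aq R p π)) (SA R p π)).comp (ΔA R p π))) =
    (Algebra.ofId R (Aq R p π)).comp (εA R p π) := by
  apply Ideal.Quotient.algHom_ext
  apply Polynomial.algHom_ext
  simp only [AlgHom.coe_comp, Function.comp_apply, Ideal.Quotient.mkₐ_eq_mk]
  rw [show (Ideal.Quotient.mk (Ideal.span ({fpoly p π} : Set (Polynomial R))) X) =
    (zQ : Aq R p π) from rfl]
  simp [Algebra.TensorProduct.lmul'_apply_tmul, Algebra.ofId_apply]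

end Defs

section Bridges

variable {B C D E : Type*} [Semiring B] [Semiring C] [Semiring D] [Semiring E]
  [Algebra R B] [Algebra R C] [Algebra R D] [Algebra R E]

theorem bridge_map_id_left (f : B →ₐ[R] C) :
    TensorProduct.map f.toLinearMap (LinearMap.id (M := D)) =
      (Algebra.TensorProduct.map f (AlgHom.id R D)).toLinearMap :=
  TensorProduct.ext' fun a b => by simp

theorem bridge_map_id_right (f : B →ₐ[R] C) :
    TensorProduct.map (LinearMap.id (M := D)) f.toLinearMap =
      (Algebra.TensorProduct.map (AlgHom.id R D) f).toLinearMap :=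
  TensorProduct.ext' fun a b => by simp

theorem bridge_assoc (y : (B ⊗[R] C) ⊗[R] D) :
    TensorProduct.assoc R B C D y = Algebra.TensorProduct.assoc R R R B C D y := by
  have : ((TensorProduct.assoc R B C D).toLinearMap)
      = (Algebra.TensorProduct.assoc R R R B C D).toLinearEquiv.toLinearMap := by
    apply TensorProduct.ext_threefold
    intro a b c
    simp
  exact DFunLike.congr_fun this y

theorem bridge_lid (y : R ⊗[R] B) :
    TensorProduct.lid R B y = Algebra.TensorProduct.lid R B y := by
  have : ((TensorProduct.lid R B).toLinearMap)
      = (Algebra.TensorProduct.lid R B).toLinearEquiv.toLinearMap := by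
    apply TensorProduct.ext'
    intro a b
    simp
  exact DFunLike.congr_fun this y

theorem bridge_rid (y : B ⊗[R] R) :
    TensorProduct.rid R B y = Algebra.TensorProduct.rid R R B y := by
  have : ((TensorProduct.rid R B).toLinearMap)
      = (Algebra.TensorProduct.rid R R B).toLinearEquiv.toLinearMap := by
    apply TensorProduct.ext'
    intro a b
    simp
  exact DFunLike.congr_fun this y

end Bridges

theorem bridge_mul' {B : Type*} [CommSemiring B] [Algebra R B] (y : B ⊗[R] B) :
    LinearMap.mul' R B y = Algebra.TensorProduct.lmul' R (S := B) y :=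
  (DFunLike.congr_fun (Algebra.TensorProduct.lmul'_toLinearMap (R := R) (S := B)) y).symm

end HopfAuxM

open HopfAuxM

/-- Let `R` be a discrete valuation ring of characteristic `p > 0` with
uniformizer `π`, and set `C′ := R[z]/(π^{p−1} z^p − z)`.  Then there exists a Hopf algebra
structure over `R` on `C′` (given by a comultiplication `Δ`, a counit `ε` and an antipode `S`
which are `R`-linear, with `Δ` and `ε` algebra homomorphisms, satisfying coassociativity, the
counit laws and the antipode laws) such that `Δ(z̄) = z̄ ⊗ 1 + 1 ⊗ z̄`, `ε(z̄) = 0` and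
`S(z̄) = −z̄`, where `z̄` is the class of `z` in `C′`. -/
theorem hopf_structure_on_M
    (R : Type*) [CommRing R] [IsDomain R] [IsDiscreteValuationRing R]
    (p : ℕ) [Fact p.Prime] [CharP R p]
    (π : R) (hπ : Irreducible π) :
    ∃ (Δ : (Polynomial R ⧸ Ideal.span ({C (π ^ (p - 1)) * X ^ p - X} : Set (Polynomial R)))
            →ₗ[R] (Polynomial R ⧸ Ideal.span ({C (π ^ (p - 1)) * X ^ p - X} : Set (Polynomial R)))
                ⊗[R] (Polynomial R ⧸ Ideal.span ({C (π ^ (p - 1)) * X ^ p - X} : Set (Polynomial R))))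
      (ε : (Polynomial R ⧸ Ideal.span ({C (π ^ (p - 1)) * X ^ p - X} : Set (Polynomial R))) →ₗ[R] R)
      (S : (Polynomial R ⧸ Ideal.span ({C (π ^ (p - 1)) * X ^ p - X} : Set (Polynomial R)))
            →ₗ[R] (Polynomial R ⧸ Ideal.span ({C (π ^ (p - 1)) * X ^ p - X} : Set (Polynomial R)))),
      -- `Δ` is an algebra homomorphism
      (∀ x y, Δ (x * y) = Δ x * Δ y) ∧ Δ 1 = 1 ∧
      -- `ε` is an algebra homomorphism
      (∀ x y, ε (x * y) = ε x * ε y) ∧ ε 1 = 1 ∧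
      -- coassociativity
      (∀ x, TensorProduct.assoc R _ _ _ (TensorProduct.map Δ LinearMap.id (Δ x)) =
        TensorProduct.map LinearMap.id Δ (Δ x)) ∧
      -- left and right counit laws
      (∀ x, TensorProduct.lid R _ (TensorProduct.map ε LinearMap.id (Δ x)) = x) ∧
      (∀ x, TensorProduct.rid R _ (TensorProduct.map LinearMap.id ε (Δ x)) = x) ∧
      -- antipode laws
      (∀ x, LinearMap.mul' R _ (TensorProduct.map S LinearMap.id (Δ x)) =
        algebraMap R _ (ε x)) ∧
      (∀ x, LinearMap.mul' R _ (TensorProduct.map LinearMap.id S (Δ x)) =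
        algebraMap R _ (ε x)) ∧
      -- values on the generator `z̄`
      Δ (Ideal.Quotient.mk _ X) =
        (Ideal.Quotient.mk _ X) ⊗ₜ[R] 1 + 1 ⊗ₜ[R] (Ideal.Quotient.mk _ X) ∧
      ε (Ideal.Quotient.mk _ X) = 0 ∧
      S (Ideal.Quotient.mk _ X) = - (Ideal.Quotient.mk _ X) := by
  refine ⟨(ΔA R p π).toLinearMap, (εA R p π).toLinearMap, (SA R p π).toLinearMap,
    fun x y => map_mul (ΔA R p π) x y, (ΔA R p π).map_one,
    fun x y => map_mul (εA R p π) x y, map_one (εA R p π),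
    ?_, ?_, ?_, ?_, ?_, ?_, ?_, ?_⟩
  · intro x
    have h := AlgHom.congr_fun (coassoc_alg R p π) x
    simp only [AlgHom.coe_comp, Function.comp_apply, AlgEquiv.toAlgHom_eq_coe, AlgHom.coe_coe] at h
    erw [bridge_map_id_left (ΔA R p π), bridge_map_id_right (ΔA R p π), bridge_assoc]
    exact h
  · intro x
    have h := AlgHom.congr_fun (counit_left_alg R p π) x
    simp only [AlgHom.coe_comp, Function.comp_apply, AlgEquiv.toAlgHom_eq_coe, AlgHom.coe_coe,
      AlgHom.coe_id, id_eq] at h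
    erw [bridge_map_id_left (εA R p π), bridge_lid]
    exact h
  · intro x
    have h := AlgHom.congr_fun (counit_right_alg R p π) x
    simp only [AlgHom.coe_comp, Function.comp_apply, AlgEquiv.toAlgHom_eq_coe, AlgHom.coe_coe,
      AlgHom.coe_id, id_eq] at h
    erw [bridge_map_id_right (εA R p π), bridge_rid]
    exact h
  · intro x
    have h := AlgHom.congr_fun (antipode_left_alg R p π) x
    simp only [AlgHom.coe_comp, Function.comp_apply] at h
    erw [bridge_map_id_left (SA R p π), bridge_mul']
    exact h
  · intro x
    have h := AlgHom.congr_fun (antipode_right_alg R p π) x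
    simp only [AlgHom.coe_comp, Function.comp_apply] at h
    erw [bridge_map_id_right (SA R p π), bridge_mul']
    exact h
  · exact ΔA_z R p π
  · exact εA_z R p π
  · exact SA_z R p π
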